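/- Let a ∈ ℝ^n with a_j > 0 for all j. If C, C̃ ∈ ℝ^n satisfy F(C) = a and F(C̃) = a, then C = C̃. -/

import Mathlib

open MeasureTheory Set
open scoped Classical

/-- `f_j^{(C)}(t) = C_j - (t - x_j)^2`. -/
noncomputable def fj (n : ℕ) (x C : Fin n → ℝ) (j : Fin n) (t : ℝ) : ℝ :=
  C j - (t - x j) ^ 2

/-- `f^{(C)}(t) = max{f_1^{(C)}(t), …, f_n^{(C)}(t), 0}`. -/
noncomputable def fmax (n : ℕ) (x C : Fin n → ℝ) (t : ℝ) : ℝ :=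
  max (⨆ j : Fin n, fj n x C j t) 0

/-- `E_j^{(C)} = {t : f_j^{(C)}(t) = f^{(C)}(t)}`. -/
def Ej (n : ℕ) (x C : Fin n → ℝ) (j : Fin n) : Set ℝ :=
  {t | fj n x C j t = fmax n x C t}

/-- `F_j(C) = ∫_{E_j^{(C)}} f^{(C)}` if `E_j^{(C)} ≠ ∅`, else `0`. -/
noncomputable def Fj (n : ℕ) (x C : Fin n → ℝ) (j : Fin n) : ℝ :=
  if (Ej n x C j).Nonempty then ∫ t in Ej n x C j, fmax n x C t else 0

/-- `F(C) = (F_1(C), …, F_n(C))`. -/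
noncomputable def Fvec (n : ℕ) (x C : Fin n → ℝ) : Fin n → ℝ :=
  fun j => Fj n x C j

/-- `𝔾 = {C : F_j(C) > 0 for all j}`. -/
def Gset (n : ℕ) (x : Fin n → ℝ) : Set (Fin n → ℝ) :=
  {C | ∀ j, 0 < Fj n x C j}

/-- `γ_{ij}(C) = (C_i - C_j)/(2(x_j - x_i)) + (x_i + x_j)/2`. -/
noncomputable def gam (n : ℕ) (x C : Fin n → ℝ) (i j : Fin n) : ℝ :=
  (C i - C j) / (2 * (x j - x i)) + (x i + x j) / 2

variable {n : ℕ} {x C : Fin n → ℝ}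

lemma fj_cont (j : Fin n) : Continuous (fj n x C j) := by
  unfold fj; fun_prop

lemma fmax_cont (hn : 1 ≤ n) : Continuous (fmax n x C) := by
  have : Nonempty (Fin n) := ⟨⟨0, hn⟩⟩
  have h1 : Continuous (fun t => ⨆ j : Fin n, fj n x C j t) := by
    have := Continuous.finset_sup'_apply (f := fun j => fj n x C j)
      (s := (Finset.univ : Finset (Fin n))) Finset.univ_nonempty (fun i _ => fj_cont i)
    convert this using 2
    exact (Finset.sup'_univ_eq_ciSup _).symm
  exact h1.max continuous_const

lemma fmax_nonneg (t : ℝ) : 0 ≤ fmax n x C t := le_max_right _ _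

lemma fj_le_fmax (j : Fin n) (t : ℝ) : fj n x C j t ≤ fmax n x C t :=
  le_trans (le_ciSup (f := fun k => fj n x C k t) (Set.Finite.bddAbove (Set.finite_range _)) j) (le_max_left _ _)

lemma fmax_eq (hn : 1 ≤ n) (j : Fin n) (t : ℝ)
    (hk : ∀ k, fj n x C k t ≤ fj n x C j t) (h0 : 0 ≤ fj n x C j t) :
    fmax n x C t = fj n x C j t := by
  have : Nonempty (Fin n) := ⟨⟨0, hn⟩⟩
  have hs : (⨆ k : Fin n, fj n x C k t) = fj n x C j t :=
    le_antisymm (ciSup_le hk) (le_ciSup (f := fun k => fj n x C k t) (Set.Finite.bddAbove (Set.finite_range _)) j)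
  unfold fmax; rw [hs, max_eq_left h0]

lemma Ej_subset_Icc (j : Fin n) :
    Ej n x C j ⊆ Icc (x j - Real.sqrt (C j)) (x j + Real.sqrt (C j)) := by
  intro t ht
  have h0 : 0 ≤ fj n x C j t := ht ▸ fmax_nonneg t
  have hsq : (t - x j) ^ 2 ≤ C j := by unfold fj at h0; linarith
  have habs : |t - x j| ≤ Real.sqrt (C j) := by
    rw [← Real.sqrt_sq_eq_abs]; exact Real.sqrt_le_sqrt hsq
  rw [abs_le] at habs
  constructor <;> linarith [habs.1, habs.2]

lemma Ej_closed (hn : 1 ≤ n) (j : Fin n) : IsClosed (Ej n x C j) :=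
  isClosed_eq (fj_cont j) (fmax_cont hn)

lemma integrableOn_Ej (hn : 1 ≤ n) (j : Fin n) :
    IntegrableOn (fmax n x C) (Ej n x C j) := by
  exact (((fmax_cont hn).integrableOn_Icc).mono_set (Ej_subset_Icc j))

lemma Ej_vol_fin (j : Fin n) : volume (Ej n x C j) < ⊤ :=
  lt_of_le_of_lt (measure_mono (Ej_subset_Icc j)) measure_Icc_lt_top

lemma key_lemma (n : ℕ) (hn : 1 ≤ n) (x : Fin n → ℝ) (a : Fin n → ℝ) (ha : ∀ j, 0 < a j)
    (C C' : Fin n → ℝ) (h : ∀ j, Fj n x C j = a j) (h' : ∀ j, Fj n x C' j = a j)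
    (hlt : ∃ i, C' i < C i) : False := by
  have hne0 : Nonempty (Fin n) := ⟨⟨0, hn⟩⟩
  obtain ⟨j, -, hj⟩ := Finset.exists_max_image Finset.univ (fun k => C k - C' k)
    ⟨Classical.arbitrary _, Finset.mem_univ _⟩
  set m := C j - C' j with hm_def
  obtain ⟨i, hi⟩ := hlt
  have hm : 0 < m := lt_of_lt_of_le (by linarith) (hj i (Finset.mem_univ i))
  -- pointwise key fact on Ej n x C' j
  have keypt : ∀ t ∈ Ej n x C' j,
      fj n x C j t = fmax n x C t ∧ fmax n x C t = fmax n x C' t + m := by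
    intro t ht
    have ht' : fj n x C' j t = fmax n x C' t := ht
    have hjj : fj n x C j t = fj n x C' j t + m := by simp only [fj, hm_def]; ring
    have hk : ∀ k, fj n x C k t ≤ fj n x C j t := by
      intro k
      have e1 : fj n x C k t = fj n x C' k t + (C k - C' k) := by simp only [fj]; ring
      have e2 := fj_le_fmax (x := x) (C := C') k t
      have e3 := hj k (Finset.mem_univ k)
      linarith
    have h0 : 0 ≤ fj n x C j t := by
      have := fmax_nonneg (x := x) (C := C') t
      linarith
    have hmx := fmax_eq hn j t hk h0
    exact ⟨hmx.symm, by rw [hmx, hjj, ht']⟩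
  have hsub : Ej n x C' j ⊆ Ej n x C j := fun t ht => (keypt t ht).1
  -- unfold the two Fj equalities
  have hne' : (Ej n x C' j).Nonempty := by
    by_contra hcon
    have := h' j
    rw [Fj, if_neg hcon] at this
    exact (ha j).ne this
  have hne2 : (Ej n x C j).Nonempty := hne'.mono hsub
  have hint' : ∫ t in Ej n x C' j, fmax n x C' t = a j := by
    have := h' j; rwa [Fj, if_pos hne'] at this
  have hint : ∫ t in Ej n x C j, fmax n x C t = a j := by
    have := h j; rwa [Fj, if_pos hne2] at this
  have hvol : 0 < (volume (Ej n x C' j)).toReal := by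
    refine ENNReal.toReal_pos (fun h0 => ?_) (Ej_vol_fin j).ne
    rw [Measure.restrict_eq_zero.mpr h0, integral_zero_measure] at hint'
    exact absurd hint'.symm (ha j).ne'
  have step1 : ∫ t in Ej n x C' j, fmax n x C t ≤ ∫ t in Ej n x C j, fmax n x C t :=
    setIntegral_mono_set (integrableOn_Ej hn j)
      (Filter.Eventually.of_forall fun t => fmax_nonneg t)
      (HasSubset.Subset.eventuallyLE hsub)
  have step2 : ∫ t in Ej n x C' j, fmax n x C t
      = ∫ t in Ej n x C' j, (fmax n x C' t + m) :=
    setIntegral_congr_fun ((Ej_closed hn j).measurableSet) (fun t ht => (keypt t ht).2)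
  have step3 : ∫ t in Ej n x C' j, (fmax n x C' t + m)
      = a j + (volume (Ej n x C' j)).toReal * m := by
    rw [integral_add (integrableOn_Ej hn j)
      (integrableOn_const (Ej_vol_fin j).ne), hint', setIntegral_const,
      smul_eq_mul, measureReal_def]
  rw [step2, step3, hint] at step1
  nlinarith

/-- Uniqueness: if `a` has all positive components and `F(C) = a = F(C̃)`,
then `C = C̃`. -/
theorem stmt_19 (n : ℕ) (hn : 1 ≤ n) (x : Fin n → ℝ) (hx : StrictMono x)
    (a : Fin n → ℝ) (ha : ∀ j, 0 < a j) (C C' : Fin n → ℝ)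
    (h : Fvec n x C = a) (h' : Fvec n x C' = a) : C = C' := by
  have hC : ∀ j, Fj n x C j = a j := fun j => congrFun h j
  have hC' : ∀ j, Fj n x C' j = a j := fun j => congrFun h' j
  by_contra hcon
  obtain ⟨i, hi⟩ := Function.ne_iff.mp hcon
  rcases lt_or_gt_of_ne hi with hlt | hlt
  · exact key_lemma n hn x a ha C' C hC' hC ⟨i, hlt⟩
  · exact key_lemma n hn x a ha C C' hC hC' ⟨i, hlt⟩
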